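/- For tensors X ∈ ℝ^{I₁×I₂×I₃} and Y ∈ ℝ^{I₂×I₄×I₃}, with X̂ = fft(X,[],3) and Ŷ = fft(Y,[],3), the t-product satisfies fft(X * Y, [], 3)(:,:,k) = X̂(:,:,k) · Ŷ(:,:,k) for every k = 1,…,I₃; i.e., the t-product becomes slice-wise matrix multiplication in the Fourier domain. -/

import Mathlib

open scoped BigOperators
open Matrix

/-- A third-order real tensor of size a × b × n; the third (tube) mode is
indexed by `ZMod n` so that the circular structure of the t-product is built in
(index k corresponds to frontal slice k+1 of the paper). -/
abbrev Tensor3 (a b n : ℕ) : Type := Fin a → Fin b → ZMod n → ℝ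

/-- The t-product X * Y = fold(circ(X) · unfold(Y)). -/
def tmul {a b c n : ℕ} [NeZero n] (X : Tensor3 a b n) (Y : Tensor3 b c n) :
    Tensor3 a c n :=
  fun i j k => ∑ l : Fin b, ∑ m : ZMod n, X i l (k - m) * Y l j m

/-- The identity tensor: first frontal slice the identity matrix, rest zero. -/
def tId (a n : ℕ) : Tensor3 a a n := fun i j k => if i = j ∧ k = 0 then 1 else 0

/-- The tensor transpose: transpose every frontal slice and reverse the order
of the transposed slices 2 through n. -/
def tTr {a b n : ℕ} (X : Tensor3 a b n) : Tensor3 b a n := fun i j k => X j i (-k)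

/-- The four Penrose equations for the Moore-Penrose pseudoinverse of a tensor
under the t-product (Definition 6 of the paper). -/
def tIsMP {a b n : ℕ} [NeZero n] (X : Tensor3 a b n) (B : Tensor3 b a n) : Prop :=
  tmul X (tmul B X) = X ∧ tmul B (tmul X B) = B ∧
    tTr (tmul X B) = tmul X B ∧ tTr (tmul B X) = tmul B X

/-- The (unnormalized) discrete Fourier transform of a tube, with
ω = exp(−2πi/n): (dft x) k = Σ_m x_m ω^{k·m}. -/
noncomputable def dft (n : ℕ) [NeZero n] (x : ZMod n → ℝ) (k : ZMod n) : ℂ :=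
  ∑ m : ZMod n, (x m : ℂ) * Complex.exp (-(2 * Real.pi * Complex.I) / n) ^ (k.val * m.val)

/-- The k-th frontal slice of fft(X,[],3): the DFT along every tube. -/
noncomputable def dftSlice {a b n : ℕ} [NeZero n] (X : Tensor3 a b n) (k : ZMod n) :
    Matrix (Fin a) (Fin b) ℂ := fun i j => dft n (X i j) k


lemma pow_mod_eq' {ω : ℂ} {n : ℕ} (hω : ω ^ n = 1) (x : ℕ) : ω ^ x = ω ^ (x % n) := by
  conv_lhs => rw [← Nat.div_add_mod x n]
  rw [pow_add, pow_mul, hω, one_pow, one_mul]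

lemma pow_congr' {ω : ℂ} {n x y : ℕ} (hω : ω ^ n = 1) (h : x ≡ y [MOD n]) :
    ω ^ x = ω ^ y := by
  rw [pow_mod_eq' hω x, pow_mod_eq' hω y, h]

/-- The t-product becomes slice-wise matrix multiplication in the Fourier
domain. -/
theorem stmt19 {I₁ I₂ I₄ I₃ : ℕ} [NeZero I₃]
    (X : Tensor3 I₁ I₂ I₃) (Y : Tensor3 I₂ I₄ I₃) :
    ∀ k : ZMod I₃, dftSlice (tmul X Y) k = dftSlice X k * dftSlice Y k := by
  intro k
  set ω := Complex.exp (-(2 * Real.pi * Complex.I) / I₃) with hωdef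
  have hn : (I₃ : ℂ) ≠ 0 := by exact_mod_cast (NeZero.ne I₃)
  have hω : ω ^ I₃ = 1 := by
    rw [hωdef, ← Complex.exp_nat_mul]
    have : (I₃ : ℂ) * (-(2 * Real.pi * Complex.I) / I₃) = -(2 * Real.pi * Complex.I) := by
      field_simp
    rw [this, Complex.exp_neg, Complex.exp_two_pi_mul_I, inv_one]
  have key : ∀ a b : ZMod I₃,
      ω ^ (k.val * (a + b).val) = ω ^ (k.val * a.val) * ω ^ (k.val * b.val) := by
    intro a b
    rw [← pow_add, ← mul_add]
    refine pow_congr' hω ?_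
    refine Nat.ModEq.mul_left k.val ?_
    rw [ZMod.val_add]
    exact Nat.mod_modEq _ _
  funext i j
  simp only [dftSlice, dft, Matrix.mul_apply, tmul]
  push_cast
  simp only [Finset.sum_mul]
  rw [Finset.sum_comm]
  refine Finset.sum_congr rfl fun l _ => ?_
  simp only [Finset.mul_sum]
  conv_lhs => rw [Finset.sum_comm]
  conv_rhs => rw [Finset.sum_comm]
  refine Finset.sum_congr rfl fun s _ => ?_
  refine Fintype.sum_equiv (Equiv.subRight s) _ _ fun a => ?_
  simp only [Equiv.subRight_apply]
  have h := key (a - s) s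
  rw [sub_add_cancel] at h
  rw [show Complex.exp (-(2 * Real.pi * Complex.I) / I₃) = ω from rfl, h]
  ring
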